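/- In the polynomial ring ℤ[X₁,X₂,X₃,Y₁,Y₂,Y₃], set q₁ := X₁²+X₂²+X₃²+X₁X₂+X₁X₃+X₂X₃ and q₂ := Y₁²+Y₂²+Y₃²+Y₁Y₂+Y₁Y₃+Y₂Y₃, and let f₁ := X₁−X₂, f₂ := X₁−X₃, f₃ := Y₁−Y₂, f₄ := Y₁−Y₃, f₅ := 2X₁+2Y₁, f₆ := 2X₁−2Y₁. Then the set of pairs of integers (α, β) such that α·q₁ + β·q₂ lies in the ℤ-span of the products f_i·f_j (1 ≤ i ≤ j ≤ 6) is exactly the subgroup of ℤ² generated by (4,4) and (2,6). (This is the computation in Lemma 7.1 of the paper showing that S²(T_H^*)^W is generated by 4q₁+4q₂ and 2q₁+6q₂.) -/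

import Mathlib

open MvPolynomial

/-- The variables `X₁,X₂,X₃,Y₁,Y₂,Y₃` of `ℤ[X₁,X₂,X₃,Y₁,Y₂,Y₃]` are modeled as
`X 0, X 1, X 2, X 3, X 4, X 5` in `MvPolynomial (Fin 6) ℤ`. `q₁` is the form
`X₁²+X₂²+X₃²+X₁X₂+X₁X₃+X₂X₃`. -/
noncomputable def q1 : MvPolynomial (Fin 6) ℤ :=
  X 0 ^ 2 + X 1 ^ 2 + X 2 ^ 2 + X 0 * X 1 + X 0 * X 2 + X 1 * X 2

/-- `q₂ = Y₁²+Y₂²+Y₃²+Y₁Y₂+Y₁Y₃+Y₂Y₃`. -/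
noncomputable def q2 : MvPolynomial (Fin 6) ℤ :=
  X 3 ^ 2 + X 4 ^ 2 + X 5 ^ 2 + X 3 * X 4 + X 3 * X 5 + X 4 * X 5

/-- The six basis linear forms `f₁,…,f₆` of Lemma 7.1:
`X₁−X₂, X₁−X₃, Y₁−Y₂, Y₁−Y₃, 2X₁+2Y₁, 2X₁−2Y₁`. -/
noncomputable def fGen : Fin 6 → MvPolynomial (Fin 6) ℤ :=
  ![X 0 - X 1, X 0 - X 2, X 3 - X 4, X 3 - X 5,
    2 * X 0 + 2 * X 3, 2 * X 0 - 2 * X 3]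

lemma dvd_eval_of_mem_span (v : Fin 6 → ℤ) (d : ℤ)
    (hd : ∀ i : Fin 6, d ∣ eval v (fGen i)) (p : MvPolynomial (Fin 6) ℤ)
    (hp : p ∈ Submodule.span ℤ {p : MvPolynomial (Fin 6) ℤ |
      ∃ i j : Fin 6, i ≤ j ∧ p = fGen i * fGen j}) :
    d * d ∣ eval v p := by
  induction hp using Submodule.span_induction with
  | mem x hx =>
      obtain ⟨i, j, -, rfl⟩ := hx
      rw [map_mul]
      exact mul_dvd_mul (hd i) (hd j)
  | zero => simp
  | add x y hx hy ihx ihy => rw [map_add]; exact dvd_add ihx ihy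
  | smul a x hx ih =>
      rw [smul_eq_C_mul, map_mul, eval_C]
      exact Dvd.dvd.mul_left ih a


/-- Lemma 7.1: `α·q₁ + β·q₂` lies in the ℤ-span of the products `f_i f_j` iff `(α,β)`
lies in the subgroup of `ℤ²` generated by `(4,4)` and `(2,6)`. -/
theorem stmt_15 (α β : ℤ) :
    (C α * q1 + C β * q2 ∈
        Submodule.span ℤ {p : MvPolynomial (Fin 6) ℤ |
          ∃ i j : Fin 6, i ≤ j ∧ p = fGen i * fGen j}) ↔
      (α, β) ∈ Submodule.span ℤ {((4, 4) : ℤ × ℤ), ((2, 6) : ℤ × ℤ)} := by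
  set M := Submodule.span ℤ {p : MvPolynomial (Fin 6) ℤ |
      ∃ i j : Fin 6, i ≤ j ∧ p = fGen i * fGen j} with hM
  constructor
  · intro h
    have hd2 : ∀ i : Fin 6, (2:ℤ) ∣ eval ![1,1,1,0,0,0] (fGen i) := by
      intro i; fin_cases i <;> norm_num [fGen, Matrix.cons_val_succ] <;> decide
    have hd4 : ∀ i : Fin 6, (4:ℤ) ∣ eval ![1,1,1,-1,-1,-1] (fGen i) := by
      intro i; fin_cases i <;> norm_num [fGen, Matrix.cons_val_succ] <;> decide
    have h1 := dvd_eval_of_mem_span ![1,1,1,0,0,0] 2 hd2 _ h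
    have h2 := dvd_eval_of_mem_span ![1,1,1,-1,-1,-1] 4 hd4 _ h
    rw [map_add, map_mul, map_mul, eval_C, eval_C] at h1 h2
    have e1 : eval ![1,1,1,0,0,0] q1 = 6 := by norm_num [q1, Matrix.cons_val_succ]; decide
    have e2 : eval ![1,1,1,0,0,0] q2 = 0 := by norm_num [q2, Matrix.cons_val_succ]; decide
    have e3 : eval ![1,1,1,-1,-1,-1] q1 = 6 := by norm_num [q1, Matrix.cons_val_succ]; decide
    have e4 : eval ![1,1,1,-1,-1,-1] q2 = 6 := by norm_num [q2, Matrix.cons_val_succ]; decide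
    rw [e1, e2] at h1
    rw [e3, e4] at h2
    obtain ⟨u, hu⟩ : (2:ℤ) ∣ α := by omega
    obtain ⟨w, hw⟩ : (8:ℤ) ∣ (α + β) := by omega
    refine Submodule.mem_span_pair.mpr ⟨u - w, 2*w - u, ?_⟩
    simp only [Prod.smul_mk, smul_eq_mul, Prod.mk_add_mk, Prod.mk.injEq]
    constructor <;> omega
  · intro h
    obtain ⟨a, b, hab⟩ := Submodule.mem_span_pair.mp h
    simp only [Prod.smul_mk, smul_eq_mul, Prod.mk_add_mk, Prod.mk.injEq] at hab
    obtain ⟨hα, hβ⟩ := hab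
    subst hα hβ
    have hmem : ∀ (c : ℤ) (i j : Fin 6), i ≤ j → C c * (fGen i * fGen j) ∈ M := by
      intro c i j hij
      have hs : fGen i * fGen j ∈ M := Submodule.subset_span ⟨i, j, hij, rfl⟩
      have := M.smul_mem c hs
      rwa [smul_eq_C_mul] at this
    have hC : ∀ (c : ℤ) (p : MvPolynomial (Fin 6) ℤ), p ∈ M → C c * p ∈ M := by
      intro c p hp
      have := M.smul_mem c hp
      rwa [smul_eq_C_mul] at this
    have mem1 :
        C 4*(fGen 0*fGen 0) + C 4*(fGen 0*fGen 1) + C (-4)*(fGen 0*fGen 4)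
        + C (-4)*(fGen 0*fGen 5) + C 4*(fGen 1*fGen 1) + C (-4)*(fGen 1*fGen 4)
        + C (-4)*(fGen 1*fGen 5) + C 4*(fGen 2*fGen 2) + C 4*(fGen 2*fGen 3)
        + C (-4)*(fGen 2*fGen 4) + C 4*(fGen 2*fGen 5) + C 4*(fGen 3*fGen 3)
        + C (-4)*(fGen 3*fGen 4) + C 4*(fGen 3*fGen 5) + C 3*(fGen 4*fGen 4)
        + C 3*(fGen 5*fGen 5) ∈ M := by
      repeat' apply M.add_mem
      all_goals exact hmem _ _ _ (by decide)
    have mem2 :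
        C 2*(fGen 0*fGen 0) + C 2*(fGen 0*fGen 1) + C (-2)*(fGen 0*fGen 4)
        + C (-2)*(fGen 0*fGen 5) + C 2*(fGen 1*fGen 1) + C (-2)*(fGen 1*fGen 4)
        + C (-2)*(fGen 1*fGen 5) + C 6*(fGen 2*fGen 2) + C 6*(fGen 2*fGen 3)
        + C (-6)*(fGen 2*fGen 4) + C 6*(fGen 2*fGen 5) + C 6*(fGen 3*fGen 3)
        + C (-6)*(fGen 3*fGen 4) + C 6*(fGen 3*fGen 5) + C 3*(fGen 4*fGen 4)
        + C (-3)*(fGen 4*fGen 5) + C 3*(fGen 5*fGen 5) ∈ M := by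
      repeat' apply M.add_mem
      all_goals exact hmem _ _ _ (by decide)
    have key : C (4*a+2*b) * q1 + C (4*a+6*b) * q2 =
        C a * (C 4*(fGen 0*fGen 0) + C 4*(fGen 0*fGen 1) + C (-4)*(fGen 0*fGen 4)
        + C (-4)*(fGen 0*fGen 5) + C 4*(fGen 1*fGen 1) + C (-4)*(fGen 1*fGen 4)
        + C (-4)*(fGen 1*fGen 5) + C 4*(fGen 2*fGen 2) + C 4*(fGen 2*fGen 3)
        + C (-4)*(fGen 2*fGen 4) + C 4*(fGen 2*fGen 5) + C 4*(fGen 3*fGen 3)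
        + C (-4)*(fGen 3*fGen 4) + C 4*(fGen 3*fGen 5) + C 3*(fGen 4*fGen 4)
        + C 3*(fGen 5*fGen 5))
        + C b * (C 2*(fGen 0*fGen 0) + C 2*(fGen 0*fGen 1) + C (-2)*(fGen 0*fGen 4)
        + C (-2)*(fGen 0*fGen 5) + C 2*(fGen 1*fGen 1) + C (-2)*(fGen 1*fGen 4)
        + C (-2)*(fGen 1*fGen 5) + C 6*(fGen 2*fGen 2) + C 6*(fGen 2*fGen 3)
        + C (-6)*(fGen 2*fGen 4) + C 6*(fGen 2*fGen 5) + C 6*(fGen 3*fGen 3)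
        + C (-6)*(fGen 3*fGen 4) + C 6*(fGen 3*fGen 5) + C 3*(fGen 4*fGen 4)
        + C (-3)*(fGen 4*fGen 5) + C 3*(fGen 5*fGen 5)) := by
      have g0 : fGen 0 = X 0 - X 1 := rfl
      have g1 : fGen 1 = X 0 - X 2 := rfl
      have g2 : fGen 2 = X 3 - X 4 := rfl
      have g3 : fGen 3 = X 3 - X 5 := rfl
      have g4 : fGen 4 = 2 * X 0 + 2 * X 3 := rfl
      have g5 : fGen 5 = 2 * X 0 - 2 * X 3 := rfl
      simp only [q1, q2, g0, g1, g2, g3, g4, g5, map_add, map_mul, map_ofNat, map_neg]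
      ring
    have goal_eq : C (4*a+2*b) * q1 + C (4*a+6*b) * q2 ∈ M := by
      rw [key]
      exact M.add_mem (hC a _ mem1) (hC b _ mem2)
    convert goal_eq using 3 <;> ring
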